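/- Let f and h be coprime polynomials in ℚ[x]. The number of pairs of polynomials (F, G) with F, G ∈ ℚ[x], at least one of F, G monic, deg F ≤ d, deg G ≤ d, and F^2 − f·G^2 = h, is finite; in fact it is bounded by a constant depending only on d and deg h. -/

import Mathlib

open Polynomial

private lemma aux_pow (k : ℕ) (hk : k ≠ 0) : k + 2 ≤ 3 ^ k := by
  induction k with
  | zero => omega
  | succ n ih =>
    rcases Nat.eq_zero_or_pos n with h0 | hpos
    · subst h0; norm_num
    · have h1 := ih (by omega)
      have h3 : 1 ≤ 3 ^ n := Nat.one_le_pow _ _ (by norm_num)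
      calc n + 1 + 2 ≤ 3 ^ n + 1 := by omega
        _ ≤ 3 ^ (n + 1) := by rw [pow_succ]; omega

/-- Degree bound: if `A² - f B² = h²` with `deg f = 3` odd and `B ≠ 0`, then
`deg B < deg h`. -/
private lemma aux_deg_bound {K : Type*} [Field K] (f h A B : K[X]) (hf3 : f.natDegree = 3)
    (hh : h ≠ 0) (hid : A ^ 2 - f * B ^ 2 = h ^ 2) (hB : B ≠ 0) :
    B.natDegree < h.natDegree := by
  have hf0 : f ≠ 0 := fun h0 => by simp [h0] at hf3
  have hfB : (f * B ^ 2).natDegree = 3 + 2 * B.natDegree := by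
    rw [natDegree_mul hf0 (pow_ne_zero _ hB), natDegree_pow, hf3]
  have hA2 : A ^ 2 = h ^ 2 + f * B ^ 2 := by linear_combination hid
  have hh2 : (h ^ 2).natDegree = 2 * h.natDegree := by rw [natDegree_pow]
  by_contra hcon
  push_neg at hcon
  have hgt : (h ^ 2).natDegree < (f * B ^ 2).natDegree := by omega
  have hsum : (h ^ 2 + f * B ^ 2).natDegree = 3 + 2 * B.natDegree := by
    rw [natDegree_add_eq_right_of_natDegree_lt hgt, hfB]
  have hA0 : A ≠ 0 := by
    intro h0
    rw [h0] at hA2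
    have he2 : f * B ^ 2 = -(h ^ 2) := by linear_combination -hA2
    have := congrArg natDegree he2
    rw [hfB, natDegree_neg, hh2] at this
    omega
  have hAA : (A ^ 2).natDegree = 2 * A.natDegree := by rw [natDegree_pow]
  rw [hA2, hsum] at hAA
  omega

/-- If the "Wronskian" vanishes, two solutions agree up to sign. -/
private lemma aux_B_eq_zero (f h F₁ G₁ F₂ G₂ : ℚ[X]) (hh : h ≠ 0)
    (h1 : F₁ ^ 2 - f * G₁ ^ 2 = h) (h2 : F₂ ^ 2 - f * G₂ ^ 2 = h)
    (hB : F₁ * G₂ - F₂ * G₁ = 0) :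
    (F₁ = F₂ ∧ G₁ = G₂) ∨ (F₁ = -F₂ ∧ G₁ = -G₂) := by
  have key : h * ((G₂ - G₁) * (G₂ + G₁)) = (F₁ * G₂ - F₂ * G₁) * (F₁ * G₂ + F₂ * G₁) := by
    linear_combination (-G₂ ^ 2) * h1 + (G₁ ^ 2) * h2
  rw [hB, zero_mul] at key
  have hG : G₂ = G₁ ∨ G₂ = -G₁ := by
    rcases mul_eq_zero.mp ((mul_eq_zero.mp key).resolve_left hh) with h' | h'
    · left; exact sub_eq_zero.mp h'
    · right; linear_combination h'
  have hGG : G₂ ^ 2 = G₁ ^ 2 := by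
    rcases hG with h' | h' <;> rw [h'] <;> ring
  have hFF : (F₁ - F₂) * (F₁ + F₂) = 0 := by
    linear_combination h1 - h2 - f * hGG
  rcases hG with hG' | hG'
  · rcases mul_eq_zero.mp hFF with hF' | hF'
    · left; exact ⟨sub_eq_zero.mp hF', hG'.symm⟩
    · have hF1 : F₁ = -F₂ := by linear_combination hF'
      rw [hG'] at hB
      have hz : F₂ * G₁ + F₂ * G₁ = 0 := by
        linear_combination (-1 : ℚ[X]) * hB + G₁ * hF1
      rcases mul_eq_zero.mp (add_self_eq_zero.mp hz) with h0 | h0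
      · left; exact ⟨by rw [hF1, h0, neg_zero], hG'.symm⟩
      · right; exact ⟨hF1, by rw [h0, hG', h0, neg_zero]⟩
  · rcases mul_eq_zero.mp hFF with hF' | hF'
    · have hF1 : F₁ = F₂ := sub_eq_zero.mp hF'
      rw [hG'] at hB
      have hz : F₂ * G₁ + F₂ * G₁ = 0 := by
        linear_combination (-1 : ℚ[X]) * hB - G₁ * hF1
      rcases mul_eq_zero.mp (add_self_eq_zero.mp hz) with h0 | h0
      · right; exact ⟨by rw [hF1, h0, neg_zero], by linear_combination hG'⟩
      · left; exact ⟨hF1, by rw [h0, hG', h0, neg_zero]⟩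
    · right
      exact ⟨by linear_combination hF', by linear_combination hG'⟩

/-- Square roots of `f'` modulo `(X - r)^m` form at most a `±` pair. -/
private lemma aux_sqrt_pair (r : ℂ) (m : ℕ) (hm : m ≠ 0) (f' : ℂ[X]) (hfr : f'.eval r ≠ 0)
    (s t : ℂ[X]) (hs : s.degree < ((m : ℕ) : WithBot ℕ)) (ht : t.degree < ((m : ℕ) : WithBot ℕ))
    (hs2 : (X - C r) ^ m ∣ s ^ 2 - f') (ht2 : (X - C r) ^ m ∣ t ^ 2 - f') :
    t = s ∨ t = -s := by
  by_contra hcon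
  push_neg at hcon
  obtain ⟨hts, htns⟩ := hcon
  have hst0 : s - t ≠ 0 := sub_ne_zero.mpr (fun h => hts h.symm)
  have hst0' : s + t ≠ 0 := fun h => htns (by linear_combination h)
  have hdvd : (X - C r) ^ m ∣ (s - t) * (s + t) := by
    have he : (s - t) * (s + t) = (s ^ 2 - f') - (t ^ 2 - f') := by ring
    rw [he]; exact dvd_sub hs2 ht2
  have hsr : s.eval r ≠ 0 := by
    intro h0
    have h1 : (X - C r) ∣ s ^ 2 - f' := (dvd_pow_self _ hm).trans hs2
    have h2 := dvd_iff_isRoot.mp h1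
    simp only [IsRoot, eval_sub, eval_pow, h0] at h2
    apply hfr
    linear_combination -h2
  have hprod0 : (s - t) * (s + t) ≠ 0 := mul_ne_zero hst0 hst0'
  have hmle : m ≤ rootMultiplicity r ((s - t) * (s + t)) :=
    (le_rootMultiplicity_iff hprod0).mpr hdvd
  rw [rootMultiplicity_mul hprod0] at hmle
  have hdegq : ((X - C r) ^ m : ℂ[X]).degree = ((m : ℕ) : WithBot ℕ) := by
    rw [degree_pow, degree_X_sub_C]; simp
  have hkey : rootMultiplicity r (s - t) = 0 ∨ rootMultiplicity r (s + t) = 0 := by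
    by_contra hc
    push_neg at hc
    have h1 : (X - C r) ∣ (s - t) := by
      have hle : 1 ≤ rootMultiplicity r (s - t) := Nat.pos_of_ne_zero hc.1
      have hdd := (pow_dvd_pow (X - C r) hle).trans (pow_rootMultiplicity_dvd (s - t) r)
      rwa [pow_one] at hdd
    have h2 : (X - C r) ∣ (s + t) := by
      have hle : 1 ≤ rootMultiplicity r (s + t) := Nat.pos_of_ne_zero hc.2
      have hdd := (pow_dvd_pow (X - C r) hle).trans (pow_rootMultiplicity_dvd (s + t) r)
      rwa [pow_one] at hdd
    have e1 := dvd_iff_isRoot.mp h1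
    have e2 := dvd_iff_isRoot.mp h2
    simp only [IsRoot, eval_sub, eval_add] at e1 e2
    apply hsr
    linear_combination (e1 + e2) / 2
  rcases hkey with h0 | h0
  · have hle : m ≤ rootMultiplicity r (s + t) := by omega
    have hd : (X - C r) ^ m ∣ (s + t) :=
      (pow_dvd_pow (X - C r) hle).trans (pow_rootMultiplicity_dvd _ r)
    have hdle := degree_le_of_dvd hd hst0'
    rw [hdegq] at hdle
    have hlt : (s + t).degree < ((m : ℕ) : WithBot ℕ) :=
      lt_of_le_of_lt (degree_add_le s t) (max_lt hs ht)
    exact absurd hdle (not_le.mpr hlt)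
  · have hle : m ≤ rootMultiplicity r (s - t) := by omega
    have hd : (X - C r) ^ m ∣ (s - t) :=
      (pow_dvd_pow (X - C r) hle).trans (pow_rootMultiplicity_dvd _ r)
    have hdle := degree_le_of_dvd hd hst0
    rw [hdegq] at hdle
    have hlt : (s - t).degree < ((m : ℕ) : WithBot ℕ) :=
      lt_of_le_of_lt (degree_sub_le s t) (max_lt hs ht)
    exact absurd hdle (not_le.mpr hlt)

/-- The set of possible local invariants at a root `r`. -/
private def Wset (r : ℂ) (k : ℕ) (f' : ℂ[X]) : Set (ℕ × ℂ[X]) :=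
  {v | 2 * v.1 ≤ k ∧
    ((k - 2 * v.1 = 0 ∧ v.2 = 0) ∨
      (k - 2 * v.1 ≠ 0 ∧ v.2.degree < ((k - 2 * v.1 : ℕ) : WithBot ℕ) ∧
        (X - C r) ^ (k - 2 * v.1) ∣ v.2 ^ 2 - f'))}

private lemma aux_W_card (r : ℂ) (k : ℕ) (f' : ℂ[X]) (hfr : f'.eval r ≠ 0) :
    Finite (Wset r k f') ∧ Nat.card (Wset r k f') ≤ k + 2 := by
  classical
  have hpick : ∀ m : ℕ, ∃ s₀ : ℂ[X], ∀ s : ℂ[X], s.degree < ((m : ℕ) : WithBot ℕ) →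
      (X - C r) ^ m ∣ s ^ 2 - f' → s = s₀ ∨ s = -s₀ := by
    intro m
    by_cases hm : m = 0
    · refine ⟨0, fun s hs _ => Or.inl ?_⟩
      subst hm
      by_contra hs0
      have := zero_le_degree_iff.mpr hs0
      simp only [Nat.cast_zero] at hs
      exact absurd this (not_le.mpr hs)
    · by_cases hne : ∃ s : ℂ[X], s.degree < ((m : ℕ) : WithBot ℕ) ∧ (X - C r) ^ m ∣ s ^ 2 - f'
      · obtain ⟨s₀, hs₀d, hs₀dvd⟩ := hne
        exact ⟨s₀, fun s hsd hsdvd => aux_sqrt_pair r m hm f' hfr s₀ s hs₀d hsd hs₀dvd hsdvd⟩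
      · exact ⟨0, fun s hsd hsdvd => absurd ⟨s, hsd, hsdvd⟩ hne⟩
  choose s₀ hs₀ using hpick
  have hjinj : Function.Injective (fun v : Wset r k f' =>
      ((⟨v.1.1, by have := v.2.1; omega⟩ : Fin (k / 2 + 1)),
        (if v.1.2 = s₀ (k - 2 * v.1.1) then 0 else 1 : Fin 2))) := by
    rintro ⟨⟨a₁, s₁⟩, hv₁⟩ ⟨⟨a₂, s₂⟩, hv₂⟩ hj
    simp only [Prod.mk.injEq, Fin.mk.injEq] at hj
    obtain ⟨ha, hif⟩ := hj
    subst ha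
    apply Subtype.ext
    simp only [Prod.mk.injEq, true_and]
    rcases hv₁.2 with ⟨hm0, hs1⟩ | ⟨hm0, hd1, hdvd1⟩
    · rcases hv₂.2 with ⟨_, hs2⟩ | ⟨hm0', _, _⟩
      · exact hs1.trans hs2.symm
      · exact absurd hm0 hm0'
    · rcases hv₂.2 with ⟨hm0', _⟩ | ⟨_, hd2, hdvd2⟩
      · exact absurd hm0' hm0
      · have hp1 := hs₀ (k - 2 * a₁) s₁ hd1 hdvd1
        have hp2 := hs₀ (k - 2 * a₁) s₂ hd2 hdvd2
        split_ifs at hif with h1 h2 h2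
        · exact h1.trans h2.symm
        · exact absurd hif (by decide)
        · exact absurd hif (by decide)
        · exact (hp1.resolve_left h1).trans (hp2.resolve_left h2).symm
  constructor
  · exact Finite.of_injective _ hjinj
  · have hle := Nat.card_le_card_of_injective _ hjinj
    rw [Nat.card_prod] at hle
    simp only [Nat.card_eq_fintype_card, Fintype.card_fin] at hle
    omega

/-- Existence of the local invariant at each `r`. -/
private lemma aux_local (f' h' F' G' : ℂ[X]) (hh' : h' ≠ 0)
    (heq : F' ^ 2 - f' * G' ^ 2 = h') (r : ℂ) :
    ∃ w : ℕ × ℂ[X], w ∈ Wset r (rootMultiplicity r h') f' ∧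
      (X - C r) ^ w.1 ∣ G' ∧
      (X - C r) ^ (w.1 + (rootMultiplicity r h' - 2 * w.1)) ∣ F' - w.2 * G' := by
  classical
  have hp : Prime (X - C r : ℂ[X]) := prime_X_sub_C r
  have hFG0 : ¬(F' = 0 ∧ G' = 0) := by
    rintro ⟨e1, e2⟩; apply hh'; rw [← heq, e1, e2]; ring
  have hg0 : EuclideanDomain.gcd F' G' ≠ 0 := by
    rw [Ne, EuclideanDomain.gcd_eq_zero_iff]; exact hFG0
  set g := EuclideanDomain.gcd F' G' with hg
  set a := rootMultiplicity r g with ha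
  have hpaF : (X - C r) ^ a ∣ F' :=
    (pow_rootMultiplicity_dvd g r).trans (EuclideanDomain.gcd_dvd_left _ _)
  have hpaG : (X - C r) ^ a ∣ G' :=
    (pow_rootMultiplicity_dvd g r).trans (EuclideanDomain.gcd_dvd_right _ _)
  have hmin : ¬((X - C r) ^ (a + 1) ∣ F' ∧ (X - C r) ^ (a + 1) ∣ G') := by
    rintro ⟨hd1, hd2⟩
    have hdg : (X - C r) ^ (a + 1) ∣ g := EuclideanDomain.dvd_gcd hd1 hd2
    have := (le_rootMultiplicity_iff hg0).mpr hdg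
    omega
  set k := rootMultiplicity r h' with hk
  obtain ⟨F₀, hF₀⟩ := hpaF
  obtain ⟨G₀, hG₀⟩ := hpaG
  have hhD : h' = (X - C r) ^ (2 * a) * (F₀ ^ 2 - f' * G₀ ^ 2) := by
    rw [← heq, hF₀, hG₀]; ring
  have hD0 : F₀ ^ 2 - f' * G₀ ^ 2 ≠ 0 := by
    intro h0; rw [h0, mul_zero] at hhD; exact hh' hhD
  have hka : k = 2 * a + rootMultiplicity r (F₀ ^ 2 - f' * G₀ ^ 2) := by
    conv_lhs => rw [hk, hhD]
    rw [rootMultiplicity_mul (by rw [← hhD]; exact hh')]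
    congr 1
    simpa using rootMultiplicity_X_sub_C_pow r (2 * a)
  have h2ak : 2 * a ≤ k := by omega
  have hmD : rootMultiplicity r (F₀ ^ 2 - f' * G₀ ^ 2) = k - 2 * a := by omega
  have hpmD : (X - C r) ^ (k - 2 * a) ∣ F₀ ^ 2 - f' * G₀ ^ 2 := by
    rw [← hmD]; exact pow_rootMultiplicity_dvd _ r
  have hpaG' : (X - C r) ^ a ∣ G' := ⟨G₀, hG₀⟩
  by_cases hm0 : k - 2 * a = 0
  · refine ⟨(a, 0), ⟨h2ak, Or.inl ⟨hm0, rfl⟩⟩, hpaG', ?_⟩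
    rw [hm0, Nat.add_zero]
    simpa using ⟨F₀, hF₀⟩
  · have hpD : (X - C r) ∣ F₀ ^ 2 - f' * G₀ ^ 2 := (dvd_pow_self _ hm0).trans hpmD
    have hpG₀ : ¬(X - C r) ∣ G₀ := by
      intro hdvd
      have hpF₀ : (X - C r) ∣ F₀ := by
        have h2 : (X - C r) ∣ F₀ ^ 2 := by
          have e1 : F₀ ^ 2 = (F₀ ^ 2 - f' * G₀ ^ 2) + f' * G₀ ^ 2 := by ring
          rw [e1]
          exact dvd_add hpD ((dvd_pow hdvd (by norm_num)).mul_left f')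
        exact hp.dvd_of_dvd_pow h2
      exact hmin ⟨by rw [hF₀, pow_succ]; exact mul_dvd_mul_left _ hpF₀, by
        rw [hG₀, pow_succ]; exact mul_dvd_mul_left _ hdvd⟩
    have hcop : IsCoprime ((X - C r) ^ (k - 2 * a)) G₀ :=
      ((hp.coprime_iff_not_dvd).mpr hpG₀).pow_left
    obtain ⟨U, V, hUV⟩ := hcop
    have hqm : ((X - C r) ^ (k - 2 * a) : ℂ[X]).Monic := (monic_X_sub_C r).pow _
    set s := (F₀ * V) %ₘ ((X - C r) ^ (k - 2 * a)) with hs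
    have hmod : s + (X - C r) ^ (k - 2 * a) * ((F₀ * V) /ₘ ((X - C r) ^ (k - 2 * a))) = F₀ * V :=
      modByMonic_add_div (F₀ * V) ((X - C r) ^ (k - 2 * a))
    set Q := (F₀ * V) /ₘ ((X - C r) ^ (k - 2 * a)) with hQ
    have hsF : (X - C r) ^ (k - 2 * a) ∣ F₀ - s * G₀ :=
      ⟨F₀ * U + Q * G₀, by linear_combination (-F₀) * hUV + (-G₀) * hmod⟩
    have hdegq : ((X - C r) ^ (k - 2 * a) : ℂ[X]).degree = ((k - 2 * a : ℕ) : WithBot ℕ) := by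
      rw [degree_pow, degree_X_sub_C]; simp
    have hsdeg : s.degree < ((k - 2 * a : ℕ) : WithBot ℕ) := by
      have := degree_modByMonic_lt (F₀ * V) hqm
      rwa [hdegq] at this
    have hsq : (X - C r) ^ (k - 2 * a) ∣ s ^ 2 - f' := by
      have hd1 : (X - C r) ^ (k - 2 * a) ∣ (s - F₀ * V) * (s + F₀ * V) :=
        Dvd.dvd.mul_right ⟨-Q, by linear_combination hmod⟩ _
      have hd2 : (X - C r) ^ (k - 2 * a) ∣ (F₀ * V) ^ 2 - f' := by
        have hiden : (F₀ * V) ^ 2 - f' = V ^ 2 * (F₀ ^ 2 - f' * G₀ ^ 2)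
            - f' * (1 + V * G₀) * (U * (X - C r) ^ (k - 2 * a)) := by
          linear_combination (f' * (1 + V * G₀)) * hUV
        rw [hiden]
        exact dvd_sub (hpmD.mul_left (V ^ 2)) ((dvd_mul_left _ U).mul_left (f' * (1 + V * G₀)))
      have he : s ^ 2 - f' = (s - F₀ * V) * (s + F₀ * V) + ((F₀ * V) ^ 2 - f') := by ring
      rw [he]; exact dvd_add hd1 hd2
    refine ⟨(a, s), ⟨h2ak, Or.inr ⟨hm0, hsdeg, hsq⟩⟩, hpaG', ?_⟩
    have he : F' - s * G' = (X - C r) ^ a * (F₀ - s * G₀) := by rw [hF₀, hG₀]; ring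
    rw [he, pow_add]
    exact mul_dvd_mul_left _ hsF

/-- Two solutions with identical local invariants at every root of `h` agree up to sign. -/
private lemma aux_inject (f h F₁ G₁ F₂ G₂ : ℚ[X]) (hf3 : f.natDegree = 3) (hh : h ≠ 0)
    (h1 : F₁ ^ 2 - f * G₁ ^ 2 = h) (h2 : F₂ ^ 2 - f * G₂ ^ 2 = h)
    (v : ℂ → ℕ × ℂ[X])
    (hv : ∀ r ∈ (h.map (algebraMap ℚ ℂ)).roots.toFinset,
      2 * (v r).1 ≤ rootMultiplicity r (h.map (algebraMap ℚ ℂ)) ∧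
      ((X - C r) ^ (v r).1 ∣ G₁.map (algebraMap ℚ ℂ)) ∧
      ((X - C r) ^ (v r).1 ∣ G₂.map (algebraMap ℚ ℂ)) ∧
      ((X - C r) ^ ((v r).1 + (rootMultiplicity r (h.map (algebraMap ℚ ℂ)) - 2 * (v r).1)) ∣
        F₁.map (algebraMap ℚ ℂ) - (v r).2 * G₁.map (algebraMap ℚ ℂ)) ∧
      ((X - C r) ^ ((v r).1 + (rootMultiplicity r (h.map (algebraMap ℚ ℂ)) - 2 * (v r).1)) ∣
        F₂.map (algebraMap ℚ ℂ) - (v r).2 * G₂.map (algebraMap ℚ ℂ))) :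
    (F₁ = F₂ ∧ G₁ = G₂) ∨ (F₁ = -F₂ ∧ G₁ = -G₂) := by
  by_cases hB : F₁ * G₂ - F₂ * G₁ = 0
  · exact aux_B_eq_zero f h F₁ G₁ F₂ G₂ hh h1 h2 hB
  exfalso
  have hφ : Function.Injective (algebraMap ℚ ℂ) := (algebraMap ℚ ℂ).injective
  have hh' : h.map (algebraMap ℚ ℂ) ≠ 0 := Polynomial.map_ne_zero hh
  have hB' : (F₁ * G₂ - F₂ * G₁).map (algebraMap ℚ ℂ) ≠ 0 := Polynomial.map_ne_zero hB
  have hBmap : (F₁ * G₂ - F₂ * G₁).map (algebraMap ℚ ℂ) =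
      F₁.map (algebraMap ℚ ℂ) * G₂.map (algebraMap ℚ ℂ)
        - F₂.map (algebraMap ℚ ℂ) * G₁.map (algebraMap ℚ ℂ) := by
    simp [Polynomial.map_sub, Polynomial.map_mul]
  have hdvd : ∀ r ∈ (h.map (algebraMap ℚ ℂ)).roots.toFinset,
      (X - C r) ^ (rootMultiplicity r (h.map (algebraMap ℚ ℂ))) ∣
        (F₁ * G₂ - F₂ * G₁).map (algebraMap ℚ ℂ) := by
    intro r hr
    obtain ⟨h2a, hG1, hG2, hF1, hF2⟩ := hv r hr
    have hiden : (F₁ * G₂ - F₂ * G₁).map (algebraMap ℚ ℂ) =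
        (F₁.map (algebraMap ℚ ℂ) - (v r).2 * G₁.map (algebraMap ℚ ℂ)) * G₂.map (algebraMap ℚ ℂ)
          - (F₂.map (algebraMap ℚ ℂ) - (v r).2 * G₂.map (algebraMap ℚ ℂ)) *
            G₁.map (algebraMap ℚ ℂ) := by
      rw [hBmap]; ring
    have hsum : ((v r).1 + (rootMultiplicity r (h.map (algebraMap ℚ ℂ)) - 2 * (v r).1)) + (v r).1
        = rootMultiplicity r (h.map (algebraMap ℚ ℂ)) := by omega
    have ht1 : (X - C r) ^ (rootMultiplicity r (h.map (algebraMap ℚ ℂ))) ∣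
        (F₁.map (algebraMap ℚ ℂ) - (v r).2 * G₁.map (algebraMap ℚ ℂ)) *
          G₂.map (algebraMap ℚ ℂ) := by
      have := mul_dvd_mul hF1 hG2
      rwa [← pow_add, hsum] at this
    have ht2 : (X - C r) ^ (rootMultiplicity r (h.map (algebraMap ℚ ℂ))) ∣
        (F₂.map (algebraMap ℚ ℂ) - (v r).2 * G₂.map (algebraMap ℚ ℂ)) *
          G₁.map (algebraMap ℚ ℂ) := by
      have := mul_dvd_mul hF2 hG1
      rwa [← pow_add, hsum] at this
    rw [hiden]
    exact dvd_sub ht1 ht2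
  have hcopr : (↑(h.map (algebraMap ℚ ℂ)).roots.toFinset : Set ℂ).Pairwise
      (Function.onFun IsCoprime fun r => (X - C r) ^ (rootMultiplicity r (h.map (algebraMap ℚ ℂ)))) := by
    intro x _ y _ hxy
    have hc : IsCoprime (X - C x) ((X - C y) : ℂ[X]) := by
      rw [(prime_X_sub_C x).coprime_iff_not_dvd]
      intro hd
      have := dvd_iff_isRoot.mp hd
      simp only [IsRoot, eval_sub, eval_X, eval_C] at this
      exact hxy (by linear_combination this)
    exact hc.pow
  have hprod : ∏ r ∈ (h.map (algebraMap ℚ ℂ)).roots.toFinset,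
      (X - C r) ^ (rootMultiplicity r (h.map (algebraMap ℚ ℂ))) ∣
        (F₁ * G₂ - F₂ * G₁).map (algebraMap ℚ ℂ) :=
    Finset.prod_dvd_of_coprime hcopr hdvd
  have hsplits : Splits (h.map (algebraMap ℚ ℂ)) := IsAlgClosed.splits _
  have hfact := hsplits.eq_prod_roots
  have hprodeq : (Multiset.map (fun a => X - C a) (h.map (algebraMap ℚ ℂ)).roots).prod
      = ∏ r ∈ (h.map (algebraMap ℚ ℂ)).roots.toFinset,
          (X - C r) ^ (rootMultiplicity r (h.map (algebraMap ℚ ℂ))) := by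
    rw [Finset.prod_multiset_map_count]
    exact Finset.prod_congr rfl fun r _ => by rw [count_roots]
  have hunit : IsUnit (C (h.map (algebraMap ℚ ℂ)).leadingCoeff) :=
    isUnit_C.mpr (isUnit_iff_ne_zero.mpr (leadingCoeff_ne_zero.mpr hh'))
  have hhdvd : (h.map (algebraMap ℚ ℂ)) ∣ (F₁ * G₂ - F₂ * G₁).map (algebraMap ℚ ℂ) := by
    conv_lhs => rw [hfact, hprodeq]
    exact hunit.mul_left_dvd.mpr hprod
  have hle := natDegree_le_of_dvd hhdvd hB'
  -- degree bound contradiction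
  have hid : (F₁ * F₂ - f * (G₁ * G₂)) ^ 2 - f * (F₁ * G₂ - F₂ * G₁) ^ 2 = h ^ 2 := by
    have e1 : (F₁ * F₂ - f * (G₁ * G₂)) ^ 2 - f * (F₁ * G₂ - F₂ * G₁) ^ 2
        = (F₁ ^ 2 - f * G₁ ^ 2) * (F₂ ^ 2 - f * G₂ ^ 2) := by ring
    rw [e1, h1, h2, sq]
  have hid' : ((F₁ * F₂ - f * (G₁ * G₂)).map (algebraMap ℚ ℂ)) ^ 2
      - (f.map (algebraMap ℚ ℂ)) * ((F₁ * G₂ - F₂ * G₁).map (algebraMap ℚ ℂ)) ^ 2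
      = (h.map (algebraMap ℚ ℂ)) ^ 2 := by
    have := congrArg (Polynomial.map (algebraMap ℚ ℂ)) hid
    simpa only [Polynomial.map_sub, Polynomial.map_mul, Polynomial.map_pow] using this
  have hf3' : (f.map (algebraMap ℚ ℂ)).natDegree = 3 := by
    rw [natDegree_map_eq_of_injective hφ, hf3]
  have hdb := aux_deg_bound (f.map (algebraMap ℚ ℂ)) (h.map (algebraMap ℚ ℂ))
    ((F₁ * F₂ - f * (G₁ * G₂)).map (algebraMap ℚ ℂ))
    ((F₁ * G₂ - F₂ * G₁).map (algebraMap ℚ ℂ)) hf3' hh' hid' hB'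
  omega

/-- The sign bit distinguishes a nonzero pair from its negative. -/
private lemma aux_bit (F G : ℚ[X]) (h0 : ¬(F = 0 ∧ G = 0)) :
    ¬((0 ≤ (-F).leadingCoeff ∧ (-F = 0 → 0 ≤ (-G).leadingCoeff)) ↔
      (0 ≤ F.leadingCoeff ∧ (F = 0 → 0 ≤ G.leadingCoeff))) := by
  intro hiff
  by_cases hF : F = 0
  · have hG : G ≠ 0 := fun hG => h0 ⟨hF, hG⟩
    have hlcG : G.leadingCoeff ≠ 0 := leadingCoeff_ne_zero.mpr hG
    subst hF
    simp only [neg_zero, leadingCoeff_zero, le_refl, true_and, forall_const] at hiff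
    rw [leadingCoeff_neg] at hiff
    rcases lt_or_gt_of_ne hlcG with h' | h'
    · have := hiff.mp (by linarith)
      linarith
    · have := hiff.mpr (by linarith)
      linarith
  · have hlcF : F.leadingCoeff ≠ 0 := leadingCoeff_ne_zero.mpr hF
    have hnF : -F ≠ 0 := neg_ne_zero.mpr hF
    simp only [hF, hnF, IsEmpty.forall_iff, and_true, forall_const, false_implies, and_true,
      leadingCoeff_neg] at hiff
    rcases lt_or_gt_of_ne hlcF with h' | h'
    · have := hiff.mp (by linarith)
      linarith
    · have := hiff.mpr (by linarith)
      linarith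

theorem finitely_many_representations (d e : ℕ) :
    ∃ C : ℕ, ∀ f h : ℚ[X], f.natDegree = 3 → Squarefree f → IsCoprime f h →
      h.natDegree = e →
      {FG : ℚ[X] × ℚ[X] | (FG.1.Monic ∨ FG.2.Monic) ∧ FG.1.natDegree ≤ d ∧
          FG.2.natDegree ≤ d ∧ FG.1 ^ 2 - f * FG.2 ^ 2 = h}.Finite ∧
        Nat.card {FG : ℚ[X] × ℚ[X] // (FG.1.Monic ∨ FG.2.Monic) ∧ FG.1.natDegree ≤ d ∧
          FG.2.natDegree ≤ d ∧ FG.1 ^ 2 - f * FG.2 ^ 2 = h} ≤ C := by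
  classical
  refine ⟨2 * 3 ^ e, fun f h hf3 _hsf hcop he => ?_⟩
  have hh : h ≠ 0 := by
    intro h0
    rw [h0] at hcop
    have := natDegree_eq_zero_of_isUnit (isCoprime_zero_right.mp hcop)
    omega
  have hφ : Function.Injective (algebraMap ℚ ℂ) := (algebraMap ℚ ℂ).injective
  have hh' : h.map (algebraMap ℚ ℂ) ≠ 0 := Polynomial.map_ne_zero hh
  -- f' has no common roots with h'
  have hfr : ∀ r : ℂ, r ∈ (h.map (algebraMap ℚ ℂ)).roots.toFinset →
      (f.map (algebraMap ℚ ℂ)).eval r ≠ 0 := by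
    intro r hr hf0
    have hcop' : IsCoprime (f.map (algebraMap ℚ ℂ)) (h.map (algebraMap ℚ ℂ)) := by
      have := hcop.map (mapRingHom (algebraMap ℚ ℂ))
      simpa using this
    have hd1 : (X - C r) ∣ f.map (algebraMap ℚ ℂ) := dvd_iff_isRoot.mpr hf0
    have hd2 : (X - C r) ∣ h.map (algebraMap ℚ ℂ) :=
      dvd_iff_isRoot.mpr (isRoot_of_mem_roots (Multiset.mem_toFinset.mp hr))
    exact not_isUnit_X_sub_C r (hcop'.isUnit_of_dvd' hd1 hd2)
  -- the solution type
  have heq' : ∀ z : {FG : ℚ[X] × ℚ[X] // (FG.1.Monic ∨ FG.2.Monic) ∧ FG.1.natDegree ≤ d ∧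
      FG.2.natDegree ≤ d ∧ FG.1 ^ 2 - f * FG.2 ^ 2 = h},
      (z.1.1.map (algebraMap ℚ ℂ)) ^ 2 - (f.map (algebraMap ℚ ℂ)) *
        (z.1.2.map (algebraMap ℚ ℂ)) ^ 2 = h.map (algebraMap ℚ ℂ) := by
    intro z
    have := congrArg (Polynomial.map (algebraMap ℚ ℂ)) z.2.2.2.2
    simpa only [Polynomial.map_sub, Polynomial.map_mul, Polynomial.map_pow] using this
  choose w hwW hwG hwF using fun (z : {FG : ℚ[X] × ℚ[X] // (FG.1.Monic ∨ FG.2.Monic) ∧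
      FG.1.natDegree ≤ d ∧ FG.2.natDegree ≤ d ∧ FG.1 ^ 2 - f * FG.2 ^ 2 = h}) (r : ℂ) =>
    aux_local (f.map (algebraMap ℚ ℂ)) (h.map (algebraMap ℚ ℂ)) (z.1.1.map (algebraMap ℚ ℂ))
      (z.1.2.map (algebraMap ℚ ℂ)) hh' (heq' z) r
  -- the invariant map
  set Θ : {FG : ℚ[X] × ℚ[X] // (FG.1.Monic ∨ FG.2.Monic) ∧ FG.1.natDegree ≤ d ∧
      FG.2.natDegree ≤ d ∧ FG.1 ^ 2 - f * FG.2 ^ 2 = h} →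
      Bool × ((r : {x : ℂ // x ∈ (h.map (algebraMap ℚ ℂ)).roots.toFinset}) →
        (Wset r.1 (rootMultiplicity r.1 (h.map (algebraMap ℚ ℂ))) (f.map (algebraMap ℚ ℂ)))) :=
    fun z => (decide (0 ≤ z.1.1.leadingCoeff ∧ (z.1.1 = 0 → 0 ≤ z.1.2.leadingCoeff)),
      fun r => ⟨w z r.1, hwW z r.1⟩) with hΘ
  have hΘinj : Function.Injective Θ := by
    intro z₁ z₂ hzz
    have hb : (Θ z₁).1 = (Θ z₂).1 := congrArg Prod.fst hzz
    have hww : ∀ r : ℂ, r ∈ (h.map (algebraMap ℚ ℂ)).roots.toFinset → w z₁ r = w z₂ r := by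
      intro r hr
      have := congrArg (fun t => ((t.2 ⟨r, hr⟩ : ℕ × ℂ[X])) ) hzz
      simpa [hΘ] using this
    have hv : ∀ r ∈ (h.map (algebraMap ℚ ℂ)).roots.toFinset,
        2 * (w z₁ r).1 ≤ rootMultiplicity r (h.map (algebraMap ℚ ℂ)) ∧
        ((X - C r) ^ (w z₁ r).1 ∣ z₁.1.2.map (algebraMap ℚ ℂ)) ∧
        ((X - C r) ^ (w z₁ r).1 ∣ z₂.1.2.map (algebraMap ℚ ℂ)) ∧
        ((X - C r) ^ ((w z₁ r).1 + (rootMultiplicity r (h.map (algebraMap ℚ ℂ)) -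
            2 * (w z₁ r).1)) ∣
          z₁.1.1.map (algebraMap ℚ ℂ) - (w z₁ r).2 * z₁.1.2.map (algebraMap ℚ ℂ)) ∧
        ((X - C r) ^ ((w z₁ r).1 + (rootMultiplicity r (h.map (algebraMap ℚ ℂ)) -
            2 * (w z₁ r).1)) ∣
          z₂.1.1.map (algebraMap ℚ ℂ) - (w z₁ r).2 * z₂.1.2.map (algebraMap ℚ ℂ)) := by
      intro r hr
      refine ⟨(hwW z₁ r).1, hwG z₁ r, ?_, hwF z₁ r, ?_⟩
      · have := hwG z₂ r; rwa [← hww r hr] at this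
      · have := hwF z₂ r; rwa [← hww r hr] at this
    rcases aux_inject f h z₁.1.1 z₁.1.2 z₂.1.1 z₂.1.2 hf3 hh z₁.2.2.2.2 z₂.2.2.2.2 (w z₁) hv
      with ⟨hF, hG⟩ | ⟨hF, hG⟩
    · exact Subtype.ext (Prod.ext hF hG)
    · exfalso
      have hFG0 : ¬(z₂.1.1 = 0 ∧ z₂.1.2 = 0) := by
        rintro ⟨e1, e2⟩
        apply hh
        rw [← z₂.2.2.2.2, e1, e2]; ring
      have hPiff := decide_eq_decide.mp hb
      rw [hF, hG] at hPiff
      exact aux_bit z₂.1.1 z₂.1.2 hFG0 hPiff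
  -- finiteness of the target
  haveI hWfin : ∀ r : {x : ℂ // x ∈ (h.map (algebraMap ℚ ℂ)).roots.toFinset},
      Finite (Wset r.1 (rootMultiplicity r.1 (h.map (algebraMap ℚ ℂ))) (f.map (algebraMap ℚ ℂ))) :=
    fun r => (aux_W_card r.1 _ _ (hfr r.1 r.2)).1
  haveI : Finite ((r : {x : ℂ // x ∈ (h.map (algebraMap ℚ ℂ)).roots.toFinset}) →
      (Wset r.1 (rootMultiplicity r.1 (h.map (algebraMap ℚ ℂ))) (f.map (algebraMap ℚ ℂ)))) :=
    Pi.finite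
  haveI hSolFin : Finite {FG : ℚ[X] × ℚ[X] // (FG.1.Monic ∨ FG.2.Monic) ∧ FG.1.natDegree ≤ d ∧
      FG.2.natDegree ≤ d ∧ FG.1 ^ 2 - f * FG.2 ^ 2 = h} := Finite.of_injective Θ hΘinj
  constructor
  · exact Set.finite_coe_iff.mp hSolFin
  · -- cardinality bound
    have h1 := Nat.card_le_card_of_injective Θ hΘinj
    rw [Nat.card_prod, Nat.card_pi] at h1
    have hbool : Nat.card Bool = 2 := by simp [Nat.card_eq_fintype_card]
    rw [hbool] at h1
    refine le_trans h1 ?_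
    have hstep : ∏ r : {x : ℂ // x ∈ (h.map (algebraMap ℚ ℂ)).roots.toFinset},
        Nat.card (Wset r.1 (rootMultiplicity r.1 (h.map (algebraMap ℚ ℂ)))
          (f.map (algebraMap ℚ ℂ)))
        ≤ ∏ r : {x : ℂ // x ∈ (h.map (algebraMap ℚ ℂ)).roots.toFinset},
            3 ^ (rootMultiplicity r.1 (h.map (algebraMap ℚ ℂ))) := by
      apply Finset.prod_le_prod'
      intro r _
      have hk1 : rootMultiplicity r.1 (h.map (algebraMap ℚ ℂ)) ≠ 0 := by
        have : 0 < rootMultiplicity r.1 (h.map (algebraMap ℚ ℂ)) :=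
          (rootMultiplicity_pos hh').mpr (isRoot_of_mem_roots (Multiset.mem_toFinset.mp r.2))
        omega
      exact le_trans ((aux_W_card r.1 _ _ (hfr r.1 r.2)).2)
        (aux_pow _ hk1)
    refine le_trans (Nat.mul_le_mul_left 2 hstep) ?_
    have hprodpow : ∏ r : {x : ℂ // x ∈ (h.map (algebraMap ℚ ℂ)).roots.toFinset},
        3 ^ (rootMultiplicity r.1 (h.map (algebraMap ℚ ℂ)))
        = 3 ^ (∑ r ∈ (h.map (algebraMap ℚ ℂ)).roots.toFinset,
            rootMultiplicity r (h.map (algebraMap ℚ ℂ))) := by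
      rw [Finset.prod_coe_sort _ (fun x => 3 ^ rootMultiplicity x (h.map (algebraMap ℚ ℂ))),
        Finset.prod_pow_eq_pow_sum]
    rw [hprodpow]
    have hsum : ∑ r ∈ (h.map (algebraMap ℚ ℂ)).roots.toFinset,
        rootMultiplicity r (h.map (algebraMap ℚ ℂ)) = e := by
      have h2 : ∀ r ∈ (h.map (algebraMap ℚ ℂ)).roots.toFinset,
          rootMultiplicity r (h.map (algebraMap ℚ ℂ))
            = (h.map (algebraMap ℚ ℂ)).roots.count r := fun r _ => (count_roots _).symm
      rw [Finset.sum_congr rfl h2, Multiset.toFinset_sum_count_eq,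
        splits_iff_card_roots.mp (IsAlgClosed.splits _),
        natDegree_map_eq_of_injective hφ, he]
    rw [hsum]
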